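/- arXiv:2009.14091 — 4 statements merged into one kernel-verified Lean document; each statement's English description precedes it below -/
import Mathlib

section
/- Let G be a finite p-group for an odd prime p, R a commutative ring, and M an RG-module admitting an R-basis A such that G·A ⊆ A ∪ (−A). Then M admits an R-basis that is permuted by G, i.e. M is a permutation RG-module. -/
/-- Over a commutative ring `R`, a module over a finite `p`-group `G` (`p` an odd prime)
admitting a sign-permutation basis (i.e. an `R`-basis `A` with `G • A ⊆ A ∪ (-A)`)
is a permutation module, i.e. admits an `R`-basis permuted by `G`. -/
theorem stmt_0 (p : ℕ) (hp : p.Prime) (hodd : p ≠ 2)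
    (G : Type) [Group G] [Fintype G] (n : ℕ) (hG : Fintype.card G = p ^ n)
    (R : Type) [CommRing R]
    (M : Type) [AddCommGroup M] [Module R M]
    [DistribMulAction G M] [SMulCommClass G R M]
    (ι : Type) (b : Module.Basis ι R M)
    (hsign : ∀ (g : G) (i : ι), (∃ j, g • (b i) = b j) ∨ (∃ j, g • (b i) = - b j)) :
    ∃ (κ : Type) (c : Module.Basis κ R M), ∀ (g : G) (i : κ), ∃ j, g • (c i) = c j := by
  classical
  by_cases hdeg : ∀ x : M, -x = x
  · -- degenerate case: negation is the identity on M
    refine ⟨ι, b, fun g i => ?_⟩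
    rcases hsign g i with ⟨j, hj⟩ | ⟨j, hj⟩
    · exact ⟨j, hj⟩
    · exact ⟨j, hj.trans (hdeg _)⟩
  · push_neg at hdeg
    obtain ⟨x, hx⟩ := hdeg
    have h1 : (1 : R) ≠ 0 := by
      intro h
      apply hx
      have hz : x = 0 := by
        calc x = (1 : R) • x := (one_smul R x).symm
          _ = (0 : R) • x := by rw [h]
          _ = 0 := zero_smul R x
      rw [hz, neg_zero]
    have h2 : (2 : R) ≠ 0 := by
      intro h
      apply hx
      have hxx : x + x = 0 := by
        have h' : (2 : R) • x = x + x := two_smul R x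
        rw [h, zero_smul] at h'
        exact h'.symm
      exact neg_eq_of_add_eq_zero_left hxx
    have : Nontrivial R := nontrivial_of_ne 1 0 h1
    -- no basis vector equals the negative of a basis vector
    have hne : ∀ j k : ι, b j ≠ -b k := by
      intro j k h
      have hadd : b j + b k = 0 := by rw [h]; exact neg_add_cancel (b k)
      have hrepr : b.repr (b j + b k) = 0 := by rw [hadd, map_zero]
      rw [map_add, b.repr_self, b.repr_self] at hrepr
      have hj := DFunLike.congr_fun hrepr j
      simp only [Finsupp.add_apply, Finsupp.single_eq_same, Finsupp.single_apply,
        Finsupp.coe_zero, Pi.zero_apply] at hj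
      by_cases hk : k = j
      · rw [if_pos hk] at hj
        exact h2 (by rw [show (2:R) = 1 + 1 by norm_num]; exact hj)
      · rw [if_neg hk, add_zero] at hj
        exact h1 hj
    -- uniqueness of signed expression
    have key : ∀ (j k : ι) (s t : ℤˣ), (s : ℤ) • b j = (t : ℤ) • b k → j = k ∧ s = t := by
      intro j k s t h
      rcases Int.units_eq_one_or s with rfl | rfl <;> rcases Int.units_eq_one_or t with rfl | rfl <;>
        simp only [Units.val_one, Units.val_neg, one_smul, neg_smul, one_zsmul] at h
      · exact ⟨b.injective h, rfl⟩
      · exact absurd h (hne j k)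
      · exact absurd h.symm (hne k j)
      · exact ⟨b.injective (neg_injective h), rfl⟩
    -- choose the signed permutation data
    have hF : ∀ (g : G) (i : ι), ∃ js : ι × ℤˣ, ((js.2 : ℤ)) • b js.1 = g • b i := by
      intro g i
      rcases hsign g i with ⟨j, hj⟩ | ⟨j, hj⟩
      · exact ⟨(j, 1), by simpa using hj.symm⟩
      · exact ⟨(j, -1), by simp [hj]⟩
    set F : G → ι → ι × ℤˣ := fun g i => (hF g i).choose with hFdef
    have hFspec : ∀ g i, ((F g i).2 : ℤ) • b (F g i).1 = g • b i := fun g i => (hF g i).choose_spec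
    have hcomm : ∀ (g : G) (z : ℤ) (y : M), g • (z • y) = z • (g • y) := by
      intro g z y
      exact map_zsmul (DistribMulAction.toAddMonoidHom M g) z y
    -- cocycle identity
    have hcoc : ∀ (g h : G) (i : ι),
        F (g * h) i = ((F g (F h i).1).1, (F h i).2 * (F g (F h i).1).2) := by
      intro g h i
      have e1 : ((F (g * h) i).2 : ℤ) • b (F (g * h) i).1
          = (((F h i).2 * (F g (F h i).1).2 : ℤˣ) : ℤ) • b (F g (F h i).1).1 := by
        rw [hFspec, mul_smul, ← hFspec h i, hcomm, ← hFspec g (F h i).1, Units.val_mul, mul_smul]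
      obtain ⟨hj, hs⟩ := key _ _ _ _ e1
      exact Prod.ext hj hs
    have hoddG : Odd (Fintype.card G) := by
      rw [hG]; exact (hp.odd_of_ne_two hodd).pow
    set δ : ι → ℤˣ := fun i => ∏ g : G, (F g i).2 with hδ
    have hδstep : ∀ (h : G) (i : ι), δ ((F h i).1) = δ i * (F h i).2 := by
      intro h i
      have hterm : ∀ g : G, (F g (F h i).1).2 = (F (g * h) i).2 * (F h i).2 := by
        intro g
        have h2' : (F (g * h) i).2 = (F h i).2 * (F g (F h i).1).2 :=
          congrArg Prod.snd (hcoc g h i)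
        rw [h2', mul_comm (F h i).2, mul_assoc, Int.units_mul_self, mul_one]
      calc δ ((F h i).1) = ∏ g : G, (F g (F h i).1).2 := rfl
        _ = ∏ g : G, (F (g * h) i).2 * (F h i).2 := Finset.prod_congr rfl (fun g _ => hterm g)
        _ = (∏ g : G, (F (g * h) i).2) * ∏ _g : G, (F h i).2 := Finset.prod_mul_distrib
        _ = δ i * (F h i).2 := by
            congr 1
            · exact (Fintype.prod_equiv (Equiv.mulRight h)
                (fun g => (F (g * h) i).2) (fun g => (F g i).2) (fun g => rfl)).symm ▸ rfl
            · rw [Finset.prod_const, Finset.card_univ]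
              rcases Int.units_eq_one_or (F h i).2 with hs | hs <;> rw [hs]
              · exact one_pow _
              · exact Odd.neg_one_pow hoddG
    set u : ι → Rˣ := fun i => Units.map (Int.castRingHom R).toMonoidHom (δ i) with hu
    have hc : ∀ i, b.unitsSMul u i = ((δ i : ℤ)) • b i := by
      intro i
      rw [Module.Basis.unitsSMul_apply]
      have : ((u i : R)) = (((δ i : ℤ) : R)) := rfl
      rw [Units.smul_def, this, Int.cast_smul_eq_zsmul]
    refine ⟨ι, b.unitsSMul u, fun g i => ⟨(F g i).1, ?_⟩⟩
    rw [hc, hc, hcomm, ← hFspec g i, smul_smul, ← Units.val_mul, ← hδstep g i]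
end

section
/- Let G be a finite 2-group, H ⊴ G a subgroup of index 2, L the one-dimensional representation on which G acts through the sign of G/H, and M an RG-module with an R-basis A such that H·A ⊆ A and G·A ⊆ A ∪ (−A). Then M decomposes as RG-modules as M = M⁺ ⊕ (L ⊗ M⁻) where M⁺ and M⁻ are permutation RG-modules. -/
/-- Let `G` be a finite 2-group, `H ⊴ G` of index 2, `L` the sign representation of `G/H`
inflated to `G`, and `M` an `RG`-module with an `R`-basis `A` such that `H • A ⊆ A` and
`G • A ⊆ A ∪ (-A)`. Then `M = M⁺ ⊕ (L ⊗ M⁻)` with `M⁺`, `M⁻` permutation modules; the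
second summand is realized as a `G`-submodule with a basis which is permuted by `H` and
sent to minus a basis vector by every element of `G \ H`. -/
theorem stmt_2 (R : Type) [CommRing R]
    (G : Type) [Group G] [Fintype G] (n : ℕ) (hG : Fintype.card G = 2 ^ n)
    (H : Subgroup G) [H.Normal] (hH : H.index = 2)
    (M : Type) [AddCommGroup M] [Module R M]
    [DistribMulAction G M] [SMulCommClass G R M]
    (ι : Type) (b : Module.Basis ι R M)
    (hHperm : ∀ h ∈ H, ∀ i : ι, ∃ j, h • (b i) = b j)
    (hsign : ∀ (g : G) (i : ι), (∃ j, g • (b i) = b j) ∨ (∃ j, g • (b i) = - b j)) :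
    ∃ (Mp N : Submodule R M),
      (∀ (g : G), ∀ x ∈ Mp, g • x ∈ Mp) ∧
      (∀ (g : G), ∀ x ∈ N, g • x ∈ N) ∧
      IsCompl Mp N ∧
      (∃ (κ : Type) (c : Module.Basis κ R Mp),
        ∀ (g : G) (i : κ), ∃ j, g • ((c i : M)) = (c j : M)) ∧
      (∃ (κ : Type) (c : Module.Basis κ R N),
        (∀ h ∈ H, ∀ i : κ, ∃ j, h • ((c i : M)) = (c j : M)) ∧
        (∀ g ∉ H, ∀ i : κ, ∃ j, g • ((c i : M)) = - (c j : M))) := by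
  classical
  by_cases hneg : ∀ x : M, -x = x
  · -- negation is trivial on M: take Mp = ⊤, N = ⊥
    refine ⟨⊤, ⊥, fun g x _ => Submodule.mem_top, ?_, isCompl_top_bot,
      ⟨ι, b.map (Submodule.topEquiv).symm, ?_⟩,
      ⟨Empty, Module.Basis.empty _, fun _ _ i => i.elim, fun _ _ i => i.elim⟩⟩
    · intro g x hx
      rw [Submodule.mem_bot] at hx
      simp [hx]
    · intro g i
      rcases hsign g i with ⟨j, hj⟩ | ⟨j, hj⟩
      · exact ⟨j, by simpa using hj⟩
      · exact ⟨j, by rw [hneg (b j)] at hj; simpa using hj⟩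
  · -- negation is nontrivial: no basis vector equals the negative of a basis vector
    have hne : ∀ j k : ι, b j ≠ -b k := by
      intro j k hjk
      apply hneg
      have h2 : (2 : R) = 0 := by
        have hrepr := congrArg b.repr hjk
        rw [map_neg, b.repr_self, b.repr_self] at hrepr
        have h1 := congrArg (fun f => f j) hrepr
        by_cases hjkeq : j = k
        · subst hjkeq
          simp only [Finsupp.coe_neg, Pi.neg_apply, Finsupp.single_eq_same] at h1
          linear_combination h1
        · simp only [Finsupp.coe_neg, Pi.neg_apply, Finsupp.single_apply, if_pos rfl,
            if_neg (Ne.symm hjkeq)] at h1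
          have h1' : (1 : R) = 0 := by simpa using h1
          linear_combination 2 * h1'
      intro x
      have hx : x + x = 0 := by
        have h2x : ((2 : R)) • x = 0 := by rw [h2, zero_smul]
        rwa [two_smul] at h2x
      exact neg_eq_of_add_eq_zero_right hx
    -- the set of "positive" basis indices
    set s : Set ι := {i | ∀ g : G, ∃ j, g • b i = b j} with hs_def
    have hpos : ∀ (g : G), ∀ i ∈ s, ∃ j ∈ s, g • b i = b j := by
      intro g i hi
      obtain ⟨j, hj⟩ := hi g
      refine ⟨j, ?_, hj⟩
      intro g'
      obtain ⟨k, hk⟩ := hi (g' * g)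
      exact ⟨k, by rw [← hj, smul_smul]; exact hk⟩
    have hHt : ∀ h ∈ H, ∀ i ∉ s, ∃ j, j ∉ s ∧ h • b i = b j := by
      intro h hh i hi
      obtain ⟨j, hj⟩ := hHperm h hh i
      refine ⟨j, ?_, hj⟩
      intro hjs
      apply hi
      intro g
      obtain ⟨k, hk⟩ := hjs (g * h⁻¹)
      rw [← hj, smul_smul, inv_mul_cancel_right] at hk
      exact ⟨k, hk⟩
    have hGt : ∀ g ∉ H, ∀ i ∉ s, ∃ j, j ∉ s ∧ g • b i = -b j := by
      intro g hg i hi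
      have hi' : ¬ ∀ g' : G, ∃ j, g' • b i = b j := hi
      obtain ⟨g₀, hg₀⟩ := not_forall.mp hi'
      have hg₀H : g₀ ∉ H := fun h0 => hg₀ (hHperm g₀ h0 i)
      rcases hsign g i with ⟨j, hj⟩ | ⟨j, hj⟩
      · exfalso
        have hmem : g₀ * g⁻¹ ∈ H := by
          rw [Subgroup.mul_mem_iff_of_index_two hH]
          exact iff_of_false hg₀H (fun hmem => hg (H.inv_mem_iff.mp hmem))
        obtain ⟨k, hk⟩ := hHperm _ hmem j
        apply hg₀
        refine ⟨k, ?_⟩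
        rw [← hk, ← hj, smul_smul, inv_mul_cancel_right]
      · refine ⟨j, ?_, hj⟩
        intro hjs
        obtain ⟨k, hk⟩ := hjs g⁻¹
        have hbj : b j = -(g • b i) := by rw [hj, neg_neg]
        have hki : b k = - b i := by
          rw [← hk, hbj, smul_neg, smul_smul, inv_mul_cancel, one_smul]
        exact hne k i hki
    -- the two submodules
    set v1 : s → M := fun i => b i.1 with hv1_def
    set v2 : (sᶜ : Set ι) → M := fun i => b i.1 with hv2_def
    have hli1 : LinearIndependent R v1 := b.linearIndependent.comp _ Subtype.val_injective
    have hli2 : LinearIndependent R v2 := b.linearIndependent.comp _ Subtype.val_injective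
    have hr1 : Set.range v1 = b '' s := by
      rw [hv1_def]
      exact (Set.range_comp b Subtype.val).trans (by rw [Subtype.range_coe])
    have hr2 : Set.range v2 = b '' sᶜ := by
      rw [hv2_def]
      exact (Set.range_comp b Subtype.val).trans (by rw [Subtype.range_coe])
    refine ⟨Submodule.span R (Set.range v1), Submodule.span R (Set.range v2),
      ?_, ?_, ⟨?_, ?_⟩, ⟨s, Module.Basis.span hli1, ?_⟩, ⟨(sᶜ : Set ι), Module.Basis.span hli2, ?_, ?_⟩⟩
    · -- Mp stable
      intro g x hx
      refine Submodule.span_induction ?_ ?_ ?_ ?_ hx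
      · rintro x ⟨⟨i, hi⟩, rfl⟩
        obtain ⟨j, hjs, hj⟩ := hpos g i hi
        show g • b i ∈ _
        rw [hj]
        exact Submodule.subset_span ⟨⟨j, hjs⟩, rfl⟩
      · simp
      · intro x y _ _ hx hy
        rw [smul_add]; exact add_mem hx hy
      · intro r x _ hx
        rw [smul_comm]; exact Submodule.smul_mem _ r hx
    · -- N stable
      intro g x hx
      refine Submodule.span_induction ?_ ?_ ?_ ?_ hx
      · rintro x ⟨⟨i, hi⟩, rfl⟩
        show g • b i ∈ _
        by_cases hgH : g ∈ H
        · obtain ⟨j, hjs, hj⟩ := hHt g hgH i hi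
          rw [hj]
          exact Submodule.subset_span ⟨⟨j, hjs⟩, rfl⟩
        · obtain ⟨j, hjs, hj⟩ := hGt g hgH i hi
          rw [hj]
          exact neg_mem (Submodule.subset_span ⟨⟨j, hjs⟩, rfl⟩)
      · simp
      · intro x y _ _ hx hy
        rw [smul_add]; exact add_mem hx hy
      · intro r x _ hx
        rw [smul_comm]; exact Submodule.smul_mem _ r hx
    · -- disjoint
      rw [hr1, hr2]
      exact b.linearIndependent.disjoint_span_image disjoint_compl_right
    · -- codisjoint
      rw [codisjoint_iff, ← Submodule.span_union, hr1, hr2, ← Set.image_union,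
        Set.union_compl_self, Set.image_univ, b.span_eq]
    · -- basis of Mp is permuted (up to sign +) by all of G
      rintro g ⟨i, hi⟩
      obtain ⟨j, hjs, hj⟩ := hpos g i hi
      exact ⟨⟨j, hjs⟩, by rw [Module.Basis.span_apply, Module.Basis.span_apply]; exact hj⟩
    · -- basis of N is permuted by H
      rintro h hh ⟨i, hi⟩
      obtain ⟨j, hjs, hj⟩ := hHt h hh i hi
      exact ⟨⟨j, hjs⟩, by rw [Module.Basis.span_apply, Module.Basis.span_apply]; exact hj⟩
    · -- basis of N is sent to minus a basis vector by G \ H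
      rintro g hg ⟨i, hi⟩
      obtain ⟨j, hjs, hj⟩ := hGt g hg i hi
      exact ⟨⟨j, hjs⟩, by rw [Module.Basis.span_apply, Module.Basis.span_apply]; exact hj⟩
end

section
/- Let R be a commutative ring, r ∈ R, R' = R[1/r], and G a finite group. Every bounded complex of finitely generated permutation R'G-modules is isomorphic in the category of complexes to the base change R' ⊗_R P of a bounded complex P of finitely generated permutation RG-modules. -/
/-- Let `R` be a commutative ring, `r ∈ R`, `R' = R[1/r]` and `G` a finite group. Every
bounded complex of finitely generated permutation `R'G`-modules (encoded by finite
`G`-sets `A i` and equivariant differentials `d'` with `d' ∘ d' = 0`) is isomorphic, in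
the category of complexes, to the base change `R' ⊗_R P` of a bounded complex `P` of
finitely generated permutation `RG`-modules. -/
theorem stmt_9 (R : Type) [CommRing R] (r : R)
    (R' : Type) [CommRing R'] [Algebra R R'] (hloc : IsLocalization.Away r R')
    (G : Type) [Group G] [Fintype G]
    (A : ℤ → Type) (finA : ∀ i, Fintype (A i)) (φ : ∀ i, G →* Equiv.Perm (A i))
    (hbdd : ∃ N : ℕ, ∀ i : ℤ, (N : ℤ) < |i| → IsEmpty (A i))
    (d' : ∀ i : ℤ, ((A i →₀ R') →ₗ[R'] (A (i - 1) →₀ R')))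
    (hd'equiv : ∀ (i : ℤ) (g : G) (f : A i →₀ R'),
      d' i (Finsupp.mapDomain (φ i g) f) = Finsupp.mapDomain (φ (i - 1) g) (d' i f))
    (hd'd' : ∀ i : ℤ, (d' (i - 1)).comp (d' i) = 0) :
    ∃ (B : ℤ → Type) (_ : ∀ i, Fintype (B i)) (ψ : ∀ i, G →* Equiv.Perm (B i))
      (d : ∀ i : ℤ, ((B i →₀ R) →ₗ[R] (B (i - 1) →₀ R))),
      -- (B, d) is a bounded complex of permutation RG-modules
      (∃ N : ℕ, ∀ i : ℤ, (N : ℤ) < |i| → IsEmpty (B i)) ∧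
      (∀ (i : ℤ) (g : G) (f : B i →₀ R),
        d i (Finsupp.mapDomain (ψ i g) f) = Finsupp.mapDomain (ψ (i - 1) g) (d i f)) ∧
      (∀ i : ℤ, (d (i - 1)).comp (d i) = 0) ∧
      -- its base change to R' is isomorphic, as a complex of R'G-modules, to (A, d')
      ∃ (dR' : ∀ i : ℤ, ((B i →₀ R') →ₗ[R'] (B (i - 1) →₀ R')))
        (e : ∀ i : ℤ, ((B i →₀ R') ≃ₗ[R'] (A i →₀ R'))),
        -- dR' is the base change of d
        (∀ (i : ℤ) (f : B i →₀ R),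
          dR' i (Finsupp.mapRange (algebraMap R R') (map_zero _) f)
            = Finsupp.mapRange (algebraMap R R') (map_zero _) (d i f)) ∧
        -- e is G-equivariant
        (∀ (i : ℤ) (g : G) (f : B i →₀ R'),
          e i (Finsupp.mapDomain (ψ i g) f) = Finsupp.mapDomain (φ i g) (e i f)) ∧
        -- e is a map of complexes
        (∀ (i : ℤ) (f : B i →₀ R'), e (i - 1) (dR' i f) = d' i (e i f)) := by
  classical
  obtain ⟨N, hN⟩ := hbdd
  haveI : IsLocalization.Away r R' := hloc
  haveI : ∀ i, Fintype (A i) := finA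
  set u : R' := algebraMap R R' r with hu_def
  have hu : IsUnit u := IsLocalization.Away.algebraMap_isUnit r
  set w : R'ˣ := hu.unit with hw_def
  -- reachability of entries
  have hrange : ∀ z : R', ∃ n : ℕ, ∃ y : R, u ^ n * z = algebraMap R R' y := by
    intro z
    refine ⟨(IsLocalization.Away.sec r z).2, (IsLocalization.Away.sec r z).1, ?_⟩
    have h := IsLocalization.Away.sec_spec (S := R') r z
    rw [mul_comm]; simpa [map_pow] using h
  have hmono : ∀ (z : R') (n m : ℕ), n ≤ m → (∃ y, u ^ n * z = algebraMap R R' y) →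
      (∃ y, u ^ m * z = algebraMap R R' y) := by
    rintro z n m hnm ⟨y, hy⟩
    refine ⟨r ^ (m - n) * y, ?_⟩
    rw [map_mul, map_pow, ← hu_def, ← hy, ← mul_assoc, ← pow_add]
    congr 2
    omega
  have htor : ∀ x : R, algebraMap R R' x = 0 → ∃ n : ℕ, r ^ n * x = 0 := by
    intro x hx
    obtain ⟨m, hm⟩ := (IsLocalization.map_eq_zero_iff (Submonoid.powers r) R' x).mp hx
    obtain ⟨n, hn⟩ := m.2
    exact ⟨n, by simp only at hn; rw [hn]; exact hm⟩
  have htormono : ∀ (x : R) (n m : ℕ), n ≤ m → r ^ n * x = 0 → r ^ m * x = 0 := by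
    intro x n m hnm h
    have : r ^ m * x = r ^ (m - n) * (r ^ n * x) := by
      rw [← mul_assoc, ← pow_add]; congr 2; omega
    rw [this, h, mul_zero]
  -- choose a uniform exponent s0
  let nexp : ∀ i : ℤ, A i → A (i - 1) → ℕ := fun i a a' =>
    (hrange (d' i (Finsupp.single a 1) a')).choose
  let F : ℤ → ℕ := fun i =>
    Finset.univ.sup (fun a : A i => Finset.univ.sup (fun a' : A (i - 1) => nexp i a a'))
  let s0 : ℕ := (Finset.Icc (-(N : ℤ)) (N + 1)).sup F
  have hkey : ∀ (i : ℤ) (a : A i) (a' : A (i - 1)),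
      ∃ y : R, u ^ s0 * (d' i (Finsupp.single a 1) a') = algebraMap R R' y := by
    intro i a a'
    by_cases hi : i ∈ Finset.Icc (-(N : ℤ)) (N + 1)
    · refine hmono _ _ _ ?_ (hrange _).choose_spec
      calc nexp i a a' ≤ Finset.univ.sup (fun a' : A (i - 1) => nexp i a a') :=
            Finset.le_sup (Finset.mem_univ a')
        _ ≤ F i := Finset.le_sup (f := fun a : A i =>
            Finset.univ.sup (fun a' : A (i - 1) => nexp i a a')) (Finset.mem_univ a)
        _ ≤ s0 := Finset.le_sup hi
    · simp only [Finset.mem_Icc, not_and_or, not_le] at hi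
      rcases hi with hi | hi
      · exact ((hN i (by rw [lt_abs]; right; omega)).false a).elim
      · exact ((hN (i - 1) (by rw [lt_abs]; left; omega)).false a').elim
  -- the lifting function
  let lift : R' → R := fun z =>
    if h : ∃ y : R, u ^ s0 * z = algebraMap R R' y then h.choose else 0
  have hlift : ∀ z : R', (∃ y : R, u ^ s0 * z = algebraMap R R' y) →
      algebraMap R R' (lift z) = u ^ s0 * z := by
    intro z h
    simp only [lift, dif_pos h]
    exact h.choose_spec.symm
  -- the lifted map L
  let col : ∀ i : ℤ, A i → (A (i - 1) →₀ R) := fun i a =>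
    Finsupp.equivFunOnFinite.symm (fun a' => lift (d' i (Finsupp.single a 1) a'))
  let L : ∀ i : ℤ, (A i →₀ R) →ₗ[R] (A (i - 1) →₀ R) := fun i =>
    Finsupp.lsum ℕ (fun a => LinearMap.toSpanSingleton R _ (col i a))
  have hLsingle : ∀ (i : ℤ) (a : A i) (c : R), L i (Finsupp.single a c) = c • col i a := by
    intro i a c
    simp [L, LinearMap.toSpanSingleton_apply]
  have hcol : ∀ (i : ℤ) (a : A i) (a' : A (i - 1)),
      col i a a' = lift (d' i (Finsupp.single a 1) a') := fun i a a' => rfl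
  -- base change of L
  have hLbc : ∀ (i : ℤ) (f : A i →₀ R),
      Finsupp.mapRange (algebraMap R R') (map_zero _) (L i f)
        = u ^ s0 • d' i (Finsupp.mapRange (algebraMap R R') (map_zero _) f) := by
    intro i f
    induction f using Finsupp.induction with
    | zero => simp
    | single_add a c f _ _ ih =>
      simp only [Finsupp.mapRange_add (map_add _), map_add, smul_add, ih]
      congr 1
      rw [hLsingle, Finsupp.mapRange_single]
      ext a'
      have h1 : Finsupp.single a (algebraMap R R' c)
          = (algebraMap R R' c) • Finsupp.single a (1 : R') := by
        rw [Finsupp.smul_single', mul_one]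
      rw [h1, map_smul]
      simp only [Finsupp.mapRange_apply, Finsupp.smul_apply, smul_eq_mul]
      rw [map_mul, hcol, hlift _ (hkey i a a')]
      ring
  -- equivariance of L
  have hLequiv : ∀ (i : ℤ) (g : G) (f : A i →₀ R),
      L i (Finsupp.mapDomain (φ i g) f) = Finsupp.mapDomain (φ (i - 1) g) (L i f) := by
    intro i g f
    induction f using Finsupp.induction with
    | zero => simp
    | single_add a c f _ _ ih =>
      simp only [Finsupp.mapDomain_add, map_add, ih]
      congr 1
      rw [Finsupp.mapDomain_single, hLsingle, hLsingle, Finsupp.mapDomain_smul]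
      congr 1
      rw [← Finsupp.equivMapDomain_eq_mapDomain]
      ext a'
      rw [Finsupp.equivMapDomain_apply, hcol, hcol]
      congr 1
      have h2 := hd'equiv i g (Finsupp.single a 1)
      rw [Finsupp.mapDomain_single] at h2
      rw [h2, ← Finsupp.equivMapDomain_eq_mapDomain, Finsupp.equivMapDomain_apply]
  -- torsion exponents
  have hY0 : ∀ (i : ℤ) (a : A i) (a'' : A (i - 1 - 1)),
      algebraMap R R' (L (i - 1) (L i (Finsupp.single a 1)) a'') = 0 := by
    intro i a a''
    have h1 := hLbc (i - 1) (L i (Finsupp.single a 1))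
    rw [hLbc i, map_smul] at h1
    have h2 : d' (i - 1) (d' i (Finsupp.mapRange (algebraMap R R') (map_zero _)
        (Finsupp.single a (1 : R)))) = 0 := by
      have h3 := DFunLike.congr_fun (hd'd' i)
        (Finsupp.mapRange (algebraMap R R') (map_zero _) (Finsupp.single a (1 : R)))
      simpa using h3
    rw [h2, smul_zero, smul_zero] at h1
    have h4 := DFunLike.congr_fun h1 a''
    simpa [Finsupp.mapRange_apply] using h4
  let texp : ∀ i : ℤ, A i → A (i - 1 - 1) → ℕ := fun i a a'' =>
    (htor _ (hY0 i a a'')).choose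
  let F2 : ℤ → ℕ := fun i =>
    Finset.univ.sup (fun a : A i => Finset.univ.sup (fun a'' : A (i - 1 - 1) => texp i a a''))
  let t0 : ℕ := (Finset.Icc (-(N : ℤ)) (N + 2)).sup F2
  have hkill : ∀ (i : ℤ) (a : A i) (a'' : A (i - 1 - 1)),
      r ^ t0 * (L (i - 1) (L i (Finsupp.single a 1)) a'') = 0 := by
    intro i a a''
    by_cases hi : i ∈ Finset.Icc (-(N : ℤ)) (N + 2)
    · refine htormono _ _ _ ?_ (htor _ (hY0 i a a'')).choose_spec
      calc texp i a a'' ≤ Finset.univ.sup (fun a'' : A (i - 1 - 1) => texp i a a'') :=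
            Finset.le_sup (Finset.mem_univ a'')
        _ ≤ F2 i := Finset.le_sup (f := fun a : A i =>
            Finset.univ.sup (fun a'' : A (i - 1 - 1) => texp i a a'')) (Finset.mem_univ a)
        _ ≤ t0 := Finset.le_sup hi
    · simp only [Finset.mem_Icc, not_and_or, not_le] at hi
      rcases hi with hi | hi
      · exact ((hN i (by rw [lt_abs]; right; omega)).false a).elim
      · exact ((hN (i - 1 - 1) (by rw [lt_abs]; left; omega)).false a'').elim
  -- the final data
  refine ⟨A, finA, φ, fun i => (r ^ t0 : R) • L i, ⟨N, hN⟩, ?_, ?_, ?_⟩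
  · intro i g f
    simp only [LinearMap.smul_apply, hLequiv, Finsupp.mapDomain_smul]
  · intro i
    apply Finsupp.lhom_ext
    intro a c
    ext a''
    simp only [LinearMap.comp_apply, LinearMap.smul_apply, LinearMap.zero_apply,
      Finsupp.smul_apply, Finsupp.coe_zero, Pi.zero_apply, map_smul, smul_eq_mul]
    have hc : L i (Finsupp.single a c) = c • L i (Finsupp.single a 1) := by
      rw [hLsingle, hLsingle, one_smul]
    rw [hc, map_smul]
    have h := hkill i a a''
    simp only [Finsupp.smul_apply, smul_eq_mul]
    calc r ^ t0 * (r ^ t0 * (c * L (i - 1) (L i (Finsupp.single a 1)) a''))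
        = (r ^ t0 * c) * (r ^ t0 * L (i - 1) (L i (Finsupp.single a 1)) a'') := by ring
      _ = 0 := by rw [h, mul_zero]
  · refine ⟨fun i => (u ^ (s0 + t0) : R') • d' i,
      fun i => LinearEquiv.smulOfUnit (w ^ (((s0 + t0 : ℕ) : ℤ) * i)), ?_, ?_, ?_⟩
    · intro i f
      ext a'
      have h := DFunLike.congr_fun (hLbc i f) a'
      simp only [Finsupp.mapRange_apply, Finsupp.smul_apply, smul_eq_mul] at h ⊢
      simp only [LinearMap.smul_apply, Finsupp.smul_apply, smul_eq_mul, map_mul, map_pow,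
        ← hu_def, h]
      ring
    · intro i g f
      show (w ^ (((s0 + t0 : ℕ) : ℤ) * i) : R'ˣ) • Finsupp.mapDomain (φ i g) f
        = Finsupp.mapDomain (φ i g) ((w ^ (((s0 + t0 : ℕ) : ℤ) * i) : R'ˣ) • f)
      rw [Finsupp.mapDomain_smul]
    · intro i f
      show (w ^ (((s0 + t0 : ℕ) : ℤ) * (i - 1)) : R'ˣ) • (u ^ (s0 + t0) • d' i f)
        = d' i ((w ^ (((s0 + t0 : ℕ) : ℤ) * i) : R'ˣ) • f)
      rw [Units.smul_def, Units.smul_def, map_smul]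
      rw [smul_smul]
      congr 1
      have hcoe : (u : R') ^ (s0 + t0) = ((w ^ (((s0 + t0 : ℕ) : ℤ)) : R'ˣ) : R') := by
        rw [zpow_natCast, Units.val_pow_eq_pow_val, hw_def, IsUnit.unit_spec]
      calc ((w ^ ((((s0 + t0 : ℕ) : ℤ)) * (i - 1)) : R'ˣ) : R') * u ^ (s0 + t0)
          = ((w ^ ((((s0 + t0 : ℕ) : ℤ)) * (i - 1)) * w ^ (((s0 + t0 : ℕ) : ℤ)) : R'ˣ) : R') := by
            rw [Units.val_mul, hcoe]
        _ = ((w ^ ((((s0 + t0 : ℕ) : ℤ)) * i) : R'ˣ) : R') := by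
            rw [← zpow_add]
            congr 1
            ring_nf
end

section
/- Let G be a finite p-group (p odd) and R a commutative ring. The trivial RG-module R admits a finite resolution 0 → Pₙ → ⋯ → P₁ → P₀ → R → 0 by finitely generated permutation RG-modules with P₀ free, obtained from the Koszul complex of the augmentation RG → R. -/
set_option linter.unusedSectionVars false
set_option maxHeartbeats 1000000

namespace Stmt12Aux
open Finset
open scoped Pointwise

variable {G : Type} [Group G] [Fintype G] [DecidableEq G]

noncomputable def w : G → ℕ := fun g => if g = 1 then 0 else (Fintype.equivFin G g : ℕ) + 1

lemma w_inj : Function.Injective (w (G := G)) := by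
  intro a b hab
  by_cases ha : a = 1 <;> by_cases hb : b = 1 <;> simp [w, ha, hb] at hab ⊢
  exact Fintype.equivFin G |>.injective (Fin.val_injective hab)

lemma w_one : w (1 : G) = 0 := by simp [w]

lemma w_pos {g : G} (h : g ≠ 1) : 0 < w g := by simp [w, h]

/-- indicator in ZMod 2 -/
def zc (P : Prop) [Decidable P] : ZMod 2 := if P then 1 else 0

noncomputable def Ifn (g : G) (q : G × G) : ZMod 2 :=
  zc (w q.1 < w q.2 ∧ w (g * q.2) < w (g * q.1))

noncomputable def E (g : G) (S : Finset G) : ZMod 2 := ∑ q ∈ S.offDiag, Ifn g q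

noncomputable def posZ (S : Finset G) (x : G) : ZMod 2 := ∑ y ∈ S.erase x, zc (w y < w x)

lemma wne {a b : G} (h : a ≠ b) : w a ≠ w b := fun hw => h (w_inj hw)

lemma E_one (S : Finset G) : E (1 : G) S = 0 := by
  apply Finset.sum_eq_zero
  intro q _
  simp only [Ifn, one_mul, zc]
  rw [if_neg]
  rintro ⟨h1, h2⟩; exact absurd h2 h1.asymm

lemma mem_smul_iff {h x : G} {S : Finset G} : h * x ∈ h • S ↔ x ∈ S := by
  constructor
  · intro hm
    rw [Finset.mem_smul_finset] at hm
    obtain ⟨y, hy, hxy⟩ := hm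
    have : y = x := mul_left_cancel hxy
    exact this ▸ hy
  · intro hm; exact Finset.smul_mem_smul_finset hm

/-- cocycle identity -/
lemma E_cocycle (g h : G) (S : Finset G) : E (g * h) S = E g (h • S) + E h S := by
  have key : E g (h • S) = ∑ q ∈ S.offDiag, Ifn g (h * q.1, h * q.2) := by
    rw [E]
    refine Finset.sum_nbij' (fun q => (h⁻¹ * q.1, h⁻¹ * q.2)) (fun q => (h * q.1, h * q.2))
      ?_ ?_ ?_ ?_ ?_
    · rintro ⟨a, b⟩ hq
      rw [Finset.mem_offDiag] at hq ⊢
      obtain ⟨h1, h2, h3⟩ := hq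
      have e1 : a = h * (h⁻¹ * a) := by group
      have e2 : b = h * (h⁻¹ * b) := by group
      rw [e1] at h1; rw [e2] at h2
      refine ⟨mem_smul_iff.mp h1, mem_smul_iff.mp h2, ?_⟩
      intro e; exact h3 (by simpa using congrArg (fun z => h * z) e)
    · rintro ⟨a, b⟩ hq
      rw [Finset.mem_offDiag] at hq ⊢
      obtain ⟨h1, h2, h3⟩ := hq
      refine ⟨Finset.smul_mem_smul_finset h1, Finset.smul_mem_smul_finset h2, ?_⟩
      intro e; exact h3 (mul_left_cancel e)
    · rintro ⟨a, b⟩ _; simp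
    · rintro ⟨a, b⟩ _; simp
    · rintro ⟨a, b⟩ hq
      simp only []
      congr 2 <;> group
  rw [key, E, E, ← Finset.sum_add_distrib]
  rw [← sub_eq_zero, ← Finset.sum_sub_distrib]
  apply Finset.sum_involution (fun q _ => (q.2, q.1))
  · rintro ⟨a, b⟩ hq
    rw [Finset.mem_offDiag] at hq
    have hab : a ≠ b := hq.2.2
    have t1 := (wne hab).lt_or_gt
    have t2 := (wne (a := h * a) (b := h * b) (fun e => hab (mul_left_cancel e))).lt_or_gt
    have t3 := (wne (a := g * (h * a)) (b := g * (h * b)) (fun e =>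
      hab (mul_left_cancel (mul_left_cancel e)))).lt_or_gt
    rcases t1 with h1 | h1 <;> rcases t2 with h2 | h2 <;> rcases t3 with h3 | h3 <;>
      simp only [Ifn, zc, mul_assoc] <;>
      simp [h1, h2, h3, h1.asymm, h2.asymm, h3.asymm, not_lt_of_gt] <;> decide
  · rintro ⟨a, b⟩ hq _
    rw [Finset.mem_offDiag] at hq
    exact fun e => hq.2.2 ((congrArg Prod.fst e).symm)
  · rintro ⟨a, b⟩ hq
    rw [Finset.mem_offDiag] at hq ⊢
    exact ⟨hq.2.1, hq.1, hq.2.2.symm⟩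
  · rintro ⟨a, b⟩ _; rfl


lemma erase_smul (g x : G) (S : Finset G) : (g • S).erase (g * x) = g • (S.erase x) := by
  ext z
  simp only [Finset.mem_erase, Finset.mem_smul_finset, smul_eq_mul, Finset.mem_erase]
  constructor
  · rintro ⟨hz, y, hy, rfl⟩
    exact ⟨y, ⟨fun e => hz (by rw [e]), hy⟩, rfl⟩
  · rintro ⟨y, ⟨hyx, hy⟩, rfl⟩
    exact ⟨fun e => hyx (mul_left_cancel e), y, hy, rfl⟩

lemma smul_sum_eq (g x : G) (T : Finset G) (f : G → ZMod 2) :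
    ∑ z ∈ g • T, f z = ∑ y ∈ T, f (g * y) := by
  rw [Finset.smul_finset_def]
  rw [Finset.sum_image (by intro a _ b _ h; simp only [smul_eq_mul] at h; exact mul_left_cancel h)]
  simp [smul_eq_mul]

lemma posZ_smul (g x : G) (S : Finset G) :
    posZ (g • S) (g * x) = ∑ y ∈ S.erase x, zc (w (g * y) < w (g * x)) := by
  rw [posZ, erase_smul, smul_sum_eq g x]

lemma pair_ptwise (g x y : G) (hxy : y ≠ x) :
    Ifn g (x, y) + Ifn g (y, x) = zc (w y < w x) + zc (w (g * y) < w (g * x)) := by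
  have t1 := (wne hxy).lt_or_gt
  have t2 := (wne (a := g * y) (b := g * x) (fun e => hxy (mul_left_cancel e))).lt_or_gt
  rcases t1 with h1 | h1 <;> rcases t2 with h2 | h2 <;>
    simp only [Ifn, zc] <;>
    simp [h1, h2, h1.asymm, h2.asymm] <;> decide

lemma E_erase (g x : G) (S : Finset G) (hx : x ∈ S) :
    E g S = E g (S.erase x) + posZ S x + posZ (g • S) (g * x) := by
  have hxT : x ∉ S.erase x := Finset.notMem_erase x S
  have hS : S = insert x (S.erase x) := (Finset.insert_erase hx).symm
  have d2 : Disjoint ((S.erase x).offDiag) ({x} ×ˢ S.erase x) := by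
    rw [Finset.disjoint_left]
    rintro ⟨a, b⟩ hq hq2
    rw [Finset.mem_product, Finset.mem_singleton] at hq2
    rw [Finset.mem_offDiag] at hq
    exact hxT (hq2.1 ▸ hq.1)
  have d1 : Disjoint ((S.erase x).offDiag ∪ {x} ×ˢ S.erase x) (S.erase x ×ˢ {x}) := by
    rw [Finset.disjoint_left]
    rintro ⟨a, b⟩ hq hq2
    rw [Finset.mem_product, Finset.mem_singleton] at hq2
    rcases Finset.mem_union.mp hq with hq | hq
    · rw [Finset.mem_offDiag] at hq
      exact hxT (hq2.2 ▸ hq.2.1)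
    · rw [Finset.mem_product, Finset.mem_singleton] at hq
      exact hxT (hq.1 ▸ hq2.1)
  have hsplit : E g S = E g (S.erase x)
      + ∑ q ∈ ({x} ×ˢ S.erase x), Ifn g q + ∑ q ∈ (S.erase x ×ˢ {x}), Ifn g q := by
    have key : E g S = ∑ q ∈ (insert x (S.erase x)).offDiag, Ifn g q := by
      rw [E]; congr 1; exact congrArg _ hS
    rw [key, Finset.offDiag_insert (s := S.erase x) (a := x) hxT,
      Finset.sum_union d1, Finset.sum_union d2]
    try rw [E]
    try ring
  rw [hsplit, Finset.sum_product, Finset.sum_singleton, Finset.sum_product]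
  simp only [Finset.sum_singleton]
  rw [posZ_smul, posZ, add_assoc, add_assoc]
  congr 1
  rw [← Finset.sum_add_distrib, ← Finset.sum_add_distrib]
  apply Finset.sum_congr rfl
  intro y hy
  exact pair_ptwise g x y (Finset.ne_of_mem_erase hy)


lemma E_pow (s : G) (T : Finset G) (h : s • T = T) (m : ℕ) :
    E (s ^ m) T = m • E s T ∧ (s ^ m) • T = T := by
  induction m with
  | zero => simpa using E_one T
  | succ m ih =>
    constructor
    · rw [pow_succ, E_cocycle, h, ih.1, succ_nsmul]
    · rw [pow_succ, mul_smul, h, ih.2]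

lemma odd_cast_one {k : ℕ} (hk : Odd k) : (k : ZMod 2) = 1 := by
  obtain ⟨t, rfl⟩ := hk
  push_cast
  have : (2 : ZMod 2) = 0 := by decide
  rw [this]; ring

lemma E_stab (hodd : Odd (Fintype.card G)) (s : G) (T : Finset G) (h : s • T = T) :
    E s T = 0 := by
  have hord : Odd (orderOf s) := by
    rcases Nat.even_or_odd (orderOf s) with he | ho
    · exfalso
      have h2 : 2 ∣ orderOf s := even_iff_two_dvd.mp he
      have : 2 ∣ Fintype.card G := h2.trans (orderOf_dvd_card)
      exact (Nat.not_odd_iff_even.mpr (even_iff_two_dvd.mpr this)) hodd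
    · exact ho
  have := (E_pow s T h (orderOf s)).1
  rw [pow_orderOf_eq_one, E_one] at this
  have h1 : (orderOf s : ZMod 2) • E s T = (0 : ZMod 2) := by
    rw [Nat.cast_smul_eq_nsmul]; exact this.symm
  rw [odd_cast_one hord, one_smul] at h1
  exact h1

lemma E_wd (hodd : Odd (Fintype.card G)) {g g' : G} {T : Finset G} (h : g • T = g' • T) :
    E g T = E g' T := by
  have hstab : (g'⁻¹ * g) • T = T := by rw [mul_smul, h, inv_smul_smul]
  have e1 : g = g' * (g'⁻¹ * g) := by group
  calc E g T = E (g' * (g'⁻¹ * g)) T := by rw [← e1]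
    _ = E g' ((g'⁻¹ * g) • T) + E (g'⁻¹ * g) T := E_cocycle _ _ _
    _ = E g' T := by rw [hstab, E_stab hodd _ _ hstab, add_zero]

noncomputable def rep (S : Finset G) : Finset G :=
  (Quotient.mk (MulAction.orbitRel G (Finset G)) S).out

lemma exists_smul_rep (S : Finset G) : ∃ g : G, g • rep S = S := by
  have h := Quotient.mk_out (s := MulAction.orbitRel G (Finset G)) S
  rw [MulAction.orbitRel_apply] at h
  obtain ⟨g, hg⟩ := h
  exact ⟨g⁻¹, by rw [rep, ← hg]; simp⟩

noncomputable def gsel (S : Finset G) : G := Classical.choose (exists_smul_rep S)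

lemma gsel_spec (S : Finset G) : gsel S • rep S = S := Classical.choose_spec (exists_smul_rep S)

noncomputable def csgn (S : Finset G) : ZMod 2 := E (gsel S) (rep S)

lemma rep_smul (g : G) (S : Finset G) : rep (g • S) = rep S := by
  unfold rep
  congr 1
  apply Quotient.sound
  exact ⟨g, rfl⟩

lemma ckey (hodd : Odd (Fintype.card G)) (g : G) (S : Finset G) :
    csgn (g • S) = E g S + csgn S := by
  have h1 : gsel (g • S) • rep S = g • S := by rw [← rep_smul g S]; exact gsel_spec _
  have h2 : (g * gsel S) • rep S = g • S := by rw [mul_smul, gsel_spec]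
  have h3 : E (gsel (g • S)) (rep S) = E (g * gsel S) (rep S) :=
    E_wd hodd (by rw [h1, h2])
  rw [csgn, rep_smul, h3, E_cocycle, gsel_spec, csgn]


-- appended to full.lean inside namespace
section MoreCombinatorics
variable {G : Type} [Group G] [Fintype G] [DecidableEq G]

lemma zc_tricho {x y : G} (h : x ≠ y) : zc (w x < w y) + zc (w y < w x) = 1 := by
  rcases (wne h).lt_or_gt with h1 | h1 <;> simp [zc, h1, h1.asymm]

lemma posZ_one_right (S : Finset G) : posZ S (1 : G) = 0 := by
  apply Finset.sum_eq_zero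
  intro y _
  simp [zc, w_one]

lemma my_erase_comm (S : Finset G) (x y : G) : (S.erase x).erase y = (S.erase y).erase x := by
  ext z; simp only [Finset.mem_erase]; tauto

lemma posZ_erase {S : Finset G} {x y : G} (hx : x ∈ S) (hxy : x ≠ y) :
    posZ (S.erase x) y + zc (w x < w y) = posZ S y := by
  rw [posZ, my_erase_comm, posZ]
  exact Finset.sum_erase_add _ _ (Finset.mem_erase.mpr ⟨hxy, hx⟩)

lemma erase_insert_comm {S : Finset G} {x : G} (hx : x ≠ (1 : G)) :
    (insert (1 : G) S).erase x = insert (1 : G) (S.erase x) := by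
  ext z
  simp only [Finset.mem_erase, Finset.mem_insert]
  constructor
  · rintro ⟨hz, hz2 | hz2⟩
    · exact Or.inl hz2
    · exact Or.inr ⟨hz, hz2⟩
  · rintro (rfl | ⟨hz, hz2⟩)
    · exact ⟨fun e => hx e.symm, Or.inl rfl⟩
    · exact ⟨hz, Or.inr hz2⟩

lemma posZ_insert_one {S : Finset G} {x : G} (h1 : (1 : G) ∉ S) (hx : x ∈ S) :
    posZ (insert (1 : G) S) x = posZ S x + 1 := by
  have hx1 : x ≠ 1 := fun e => h1 (e ▸ hx)
  rw [posZ, erase_insert_comm hx1, Finset.sum_insert (fun e => h1 (Finset.mem_of_mem_erase e))]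
  rw [posZ]
  have : zc (w (1 : G) < w x) = 1 := by simp [zc, w_one, w_pos hx1]
  rw [this, add_comm]

lemma E_card_one (g : G) {S : Finset G} (h : S.card = 1) : E g S = 0 := by
  obtain ⟨x, rfl⟩ := Finset.card_eq_one.mp h
  rw [E]
  have : ({x} : Finset G).offDiag = ∅ := by
    ext q; simp only [Finset.mem_offDiag, Finset.mem_singleton, Finset.notMem_empty, iff_false]
    rintro ⟨h1, h2, h3⟩; exact h3 (h1.trans h2.symm)
  rw [this, Finset.sum_empty]

lemma smul_sum_eqM {M : Type} [AddCommMonoid M] (g : G) (T : Finset G) (f : G → M) :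
    ∑ z ∈ g • T, f z = ∑ y ∈ T, f (g * y) := by
  rw [Finset.smul_finset_def]
  rw [Finset.sum_image (by intro a _ b _ h; simp only [smul_eq_mul] at h
                           exact mul_left_cancel h)]
  simp [smul_eq_mul]

end MoreCombinatorics

section Modules
variable (R : Type) [CommRing R]

def sg (z : ZMod 2) : R := if z = 0 then 1 else -1

lemma zmod2_cases (z : ZMod 2) : z = 0 ∨ z = 1 := by revert z; decide

lemma sg_add (a b : ZMod 2) : sg R (a + b) = sg R a * sg R b := by
  have h11 : (1 + 1 : ZMod 2) = 0 := by decide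
  rcases zmod2_cases a with ha | ha <;> rcases zmod2_cases b with hb | hb <;>
    subst ha <;> subst hb <;> simp [sg, h11]

lemma sg_mul_self (a : ZMod 2) : sg R a * sg R a = 1 := by
  rcases zmod2_cases a with ha | ha <;> subst ha <;> simp [sg]

lemma sg_zero : sg R 0 = 1 := by simp [sg]

lemma sg_add_one (a : ZMod 2) : sg R (a + 1) = - sg R a := by
  have h11 : (1 + 1 : ZMod 2) = 0 := by decide
  rcases zmod2_cases a with ha | ha <;> subst ha <;> simp [sg, h11]

variable {G : Type} [Group G] [Fintype G] [DecidableEq G]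

abbrev AA (G : Type) [Group G] [Fintype G] [DecidableEq G] (i : ℕ) : Type :=
  {S : Finset G // S.card = i + 1}

instance AAfintype (i : ℕ) : Fintype (AA G i) := Subtype.fintype _

lemma AA_isEmpty (i : ℕ) (h : Fintype.card G ≤ i) : IsEmpty (AA G i) := by
  constructor
  intro a
  have h1 : a.1.card ≤ Fintype.card G := Finset.card_le_univ a.1
  rw [a.2] at h1
  omega

def act (i : ℕ) (g : G) : Equiv.Perm (AA G i) where
  toFun a := ⟨g • a.1, by rw [Finset.card_smul_finset]; exact a.2⟩
  invFun a := ⟨g⁻¹ • a.1, by rw [Finset.card_smul_finset]; exact a.2⟩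
  left_inv a := by apply Subtype.ext; simp
  right_inv a := by apply Subtype.ext; simp

lemma act_apply (i : ℕ) (g : G) (a : AA G i) : (act i g a).1 = g • a.1 := rfl

def phi (i : ℕ) : G →* Equiv.Perm (AA G i) where
  toFun := act i
  map_one' := by
    apply Equiv.ext; intro a; apply Subtype.ext; simp [act_apply]
  map_mul' g h := by
    apply Equiv.ext; intro a; apply Subtype.ext
    simp [act_apply, mul_smul, Equiv.Perm.mul_apply]

noncomputable def co (S : Finset G) (x : G) : R := sg R (csgn S + csgn (S.erase x) + posZ S x)

noncomputable def delElt (i : ℕ) (a : AA G (i + 1)) (x : G) : AA G i →₀ R :=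
  if h : x ∈ a.1 then
    Finsupp.single ⟨a.1.erase x, by simp [Finset.card_erase_of_mem h, a.2]⟩ (co R a.1 x)
  else 0

noncomputable def dmap (i : ℕ) : (AA G (i + 1) →₀ R) →ₗ[R] (AA G i →₀ R) :=
  Finsupp.linearCombination R (fun a => ∑ x ∈ a.1, delElt R i a x)

noncomputable def hv (i : ℕ) (a : AA G i) : AA G (i + 1) →₀ R :=
  if h : (1 : G) ∈ a.1 then 0
  else Finsupp.single ⟨insert 1 a.1, by rw [Finset.card_insert_of_notMem h, a.2]⟩
    (sg R (csgn a.1 + csgn (insert 1 a.1)))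

noncomputable def hmap (i : ℕ) : (AA G i →₀ R) →ₗ[R] (AA G (i + 1) →₀ R) :=
  Finsupp.linearCombination R (hv R i)

noncomputable def eps : (AA G 0 →₀ R) →ₗ[R] R :=
  Finsupp.linearCombination R (fun a => sg R (csgn a.1))

noncomputable def eta : R →ₗ[R] (AA G 0 →₀ R) :=
  LinearMap.toSpanSingleton R _
    (Finsupp.single ⟨({1} : Finset G), Finset.card_singleton 1⟩ (sg R (csgn ({1} : Finset G))))

lemma dmap_single (i : ℕ) (a : AA G (i + 1)) (r : R) :
    dmap R i (Finsupp.single a r) = r • ∑ x ∈ a.1, delElt R i a x := by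
  rw [dmap, Finsupp.linearCombination_single]

lemma hmap_single (i : ℕ) (a : AA G i) (r : R) :
    hmap R i (Finsupp.single a r) = r • hv R i a := by
  rw [hmap, Finsupp.linearCombination_single]

lemma eps_single (a : AA G 0) (r : R) :
    eps R (Finsupp.single a r) = r * sg R (csgn a.1) := by
  rw [eps, Finsupp.linearCombination_single, smul_eq_mul]

lemma co_smul (hodd : Odd (Fintype.card G)) (g : G) (S : Finset G) (x : G) (hx : x ∈ S) :
    co R (g • S) (g * x) = co R S x := by
  have two : ∀ z : ZMod 2, z + z = 0 := by decide
  rw [co, co]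
  congr 1
  rw [erase_smul, ckey hodd g S, ckey hodd g (S.erase x)]
  have he := E_erase g x S hx
  linear_combination he + two (E g (S.erase x)) + two (posZ (g • S) (g * x))

end Modules

section Identities
variable (R : Type) [CommRing R]
variable {G : Type} [Group G] [Fintype G] [DecidableEq G]

lemma AA_mk_coe {i : ℕ} (S : Finset G) (pf : S.card = i + 1) :
    ((⟨S, pf⟩ : AA G i) : Finset G) = S := rfl

lemma delElt_pos {i : ℕ} (a : AA G (i + 1)) {x : G} (h : x ∈ a.1)
    (pf : (a.1.erase x).card = i + 1) :
    delElt R i a x = Finsupp.single ⟨a.1.erase x, pf⟩ (co R a.1 x) := by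
  rw [delElt, dif_pos h]

lemma single_eq_of {i : ℕ} (a b : AA G i) (h : a.1 = b.1) {r s : R} (hrs : r = s) :
    Finsupp.single a r = Finsupp.single b s := by
  subst hrs; congr 1; exact Subtype.ext h

lemma delElt_smul (hodd : Odd (Fintype.card G)) (i : ℕ) (g : G) (a : AA G (i + 1)) (x : G)
    (hx : x ∈ a.1) :
    delElt R i (act (i + 1) g a) (g * x) = Finsupp.mapDomain (act i g) (delElt R i a x) := by
  have hmem : g * x ∈ (act (i + 1) g a).1 := by rw [act_apply]; exact mem_smul_iff.mpr hx
  rw [delElt_pos R (act (i + 1) g a) hmem (by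
        rw [Finset.card_erase_of_mem hmem, (act (i + 1) g a).2]; omega),
      delElt_pos R a hx (by rw [Finset.card_erase_of_mem hx, a.2]; omega),
      Finsupp.mapDomain_single]
  apply single_eq_of
  · show ((act (i + 1) g a).1.erase (g * x)) = (act i g ⟨a.1.erase x, _⟩).1
    rw [act_apply, act_apply]
    exact erase_smul g x a.1
  · show co R (act (i + 1) g a).1 (g * x) = co R a.1 x
    rw [act_apply]
    exact co_smul R hodd g a.1 x hx

lemma d_equiv (hodd : Odd (Fintype.card G)) (i : ℕ) (g : G) (f : AA G (i + 1) →₀ R) :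
    dmap R i (Finsupp.mapDomain (act (i + 1) g) f)
      = Finsupp.mapDomain (act i g) (dmap R i f) := by
  have key : (dmap R i).comp (Finsupp.lmapDomain R R (act (i + 1) g))
      = (Finsupp.lmapDomain R R (act i g)).comp (dmap R i) := by
    apply Finsupp.lhom_ext
    intro a r
    simp only [LinearMap.comp_apply, Finsupp.lmapDomain_apply, Finsupp.mapDomain_single]
    rw [dmap_single, dmap_single, Finsupp.mapDomain_smul]
    congr 1
    rw [Finsupp.mapDomain_finset_sum]
    have hidx : (act (i + 1) g a).1 = g • a.1 := act_apply _ _ _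
    rw [hidx]
    rw [smul_sum_eqM g a.1 (fun y => delElt R i (act (i + 1) g a) y)]
    apply Finset.sum_congr rfl
    intro x hx
    exact delElt_smul R hodd i g a x hx
  have := LinearMap.congr_fun key f
  simpa only [LinearMap.comp_apply, Finsupp.lmapDomain_apply] using this

lemma eps_equiv (hodd : Odd (Fintype.card G)) (g : G) (f : AA G 0 →₀ R) :
    eps R (Finsupp.mapDomain (act 0 g) f) = eps R f := by
  have key : (eps R).comp (Finsupp.lmapDomain R R (act 0 g)) = eps R := by
    apply Finsupp.lhom_ext
    intro a r
    simp only [LinearMap.comp_apply, Finsupp.lmapDomain_apply, Finsupp.mapDomain_single]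
    rw [eps_single, eps_single]
    congr 1
    rw [act_apply, ckey hodd, E_card_one g a.2, zero_add]
  have := LinearMap.congr_fun key f
  simpa only [LinearMap.comp_apply, Finsupp.lmapDomain_apply] using this

lemma co_anticomm (hodd : Odd (Fintype.card G)) {S : Finset G} {x y : G}
    (hx : x ∈ S) (hy : y ∈ S) (hxy : x ≠ y) :
    co R S x * co R (S.erase x) y + co R S y * co R (S.erase y) x = 0 := by
  have two : ∀ z : ZMod 2, z + z = 0 := by decide
  rw [co, co, co, co, ← sg_add, ← sg_add]
  have hrw : (S.erase y).erase x = (S.erase x).erase y := my_erase_comm S y x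
  rw [hrw]
  have gf2 : ∀ a b b' cxy px py qxy qyx z1 z2 : ZMod 2, qxy + z1 = py → qyx + z2 = px →
      z1 + z2 = 1 → a + b + px + (b + cxy + qxy) = a + b' + py + (b' + cxy + qyx) + 1 := by
    decide
  have h1 : posZ (S.erase x) y + zc (w x < w y) = posZ S y := posZ_erase hx hxy
  have h2 : posZ (S.erase y) x + zc (w y < w x) = posZ S x := posZ_erase hy hxy.symm
  have h3 : zc (w x < w y) + zc (w y < w x) = 1 := zc_tricho hxy
  have key := gf2 (csgn S) (csgn (S.erase x)) (csgn (S.erase y)) (csgn ((S.erase x).erase y))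
    (posZ S x) (posZ S y) (posZ (S.erase x) y) (posZ (S.erase y) x)
    (zc (w x < w y)) (zc (w y < w x)) h1 h2 h3
  rw [key, sg_add_one]
  ring

noncomputable def F2 (i : ℕ) (a : AA G (i + 2)) (x y : G) : AA G i →₀ R :=
  if h : x ∈ a.1 ∧ y ∈ a.1.erase x then
    Finsupp.single ⟨(a.1.erase x).erase y, by
        rw [Finset.card_erase_of_mem h.2, Finset.card_erase_of_mem h.1, a.2]; omega⟩
      (co R a.1 x * co R (a.1.erase x) y)
  else 0

lemma F2_pos (i : ℕ) (a : AA G (i + 2)) {x y : G} (h1 : x ∈ a.1) (h2 : y ∈ a.1.erase x)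
    (pf : ((a.1.erase x).erase y).card = i + 1) :
    F2 R i a x y = Finsupp.single ⟨(a.1.erase x).erase y, pf⟩
      (co R a.1 x * co R (a.1.erase x) y) := by
  rw [F2, dif_pos ⟨h1, h2⟩]

lemma F2_diag (i : ℕ) (a : AA G (i + 2)) (x : G) : F2 R i a x x = 0 := by
  rw [F2, dif_neg]
  rintro ⟨-, h2⟩
  exact Finset.notMem_erase x a.1 h2

lemma dd_single (hodd : Odd (Fintype.card G)) (i : ℕ) (a : AA G (i + 2)) (r : R) :
    dmap R i (dmap R (i + 1) (Finsupp.single a r)) = 0 := by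
  have hcard : a.1.card = i + 3 := a.2
  have pf2 : ∀ x y : G, x ∈ a.1 → y ∈ a.1.erase x → ((a.1.erase x).erase y).card = i + 1 := by
    intro x y hx hy
    rw [Finset.card_erase_of_mem hy, Finset.card_erase_of_mem hx, hcard]
    omega
  have step : ∀ x ∈ a.1, dmap R i (delElt R (i + 1) a x) = ∑ y ∈ a.1, F2 R i a x y := by
    intro x hx
    have pfx : (a.1.erase x).card = (i + 1) + 1 := by
      rw [Finset.card_erase_of_mem hx, hcard]; omega
    rw [delElt_pos R a hx pfx, dmap_single, Finset.smul_sum]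
    have hsub : ∀ y ∈ a.1.erase x,
        co R a.1 x • delElt R i ⟨a.1.erase x, pfx⟩ y = F2 R i a x y := by
      intro y hy
      rw [delElt_pos R ⟨a.1.erase x, pfx⟩ (show y ∈ a.1.erase x from hy)
        (show ((a.1.erase x).erase y).card = i + 1 from pf2 x y hx hy),
        Finsupp.smul_single', F2_pos R i a hx hy (pf2 x y hx hy)]
    rw [show (⟨a.1.erase x, pfx⟩ : AA G (i + 1)).1 = a.1.erase x from rfl]
    rw [Finset.sum_congr rfl hsub]
    exact Finset.sum_erase _ (F2_diag R i a x)
  rw [dmap_single, map_smul, map_sum, Finset.sum_congr rfl step]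
  rw [← Finset.sum_product' (s := a.1) (t := a.1) (f := fun x y => F2 R i a x y)]
  have hzero : ∑ q ∈ a.1 ×ˢ a.1, F2 R i a q.1 q.2 = 0 := by
    apply Finset.sum_involution (fun q _ => (q.2, q.1))
    · rintro ⟨x, y⟩ hq
      rw [Finset.mem_product] at hq
      by_cases hxy : x = y
      · subst hxy
        rw [F2_diag, add_zero]
      · have hy' : y ∈ a.1.erase x := Finset.mem_erase.mpr ⟨fun e => hxy e.symm, hq.2⟩
        have hx' : x ∈ a.1.erase y := Finset.mem_erase.mpr ⟨hxy, hq.1⟩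
        rw [F2_pos R i a hq.1 hy' (pf2 x y hq.1 hy'), F2_pos R i a hq.2 hx' (pf2 y x hq.2 hx')]
        rw [single_eq_of R (⟨(a.1.erase y).erase x, pf2 y x hq.2 hx'⟩ : AA G i)
          ⟨(a.1.erase x).erase y, pf2 x y hq.1 hy'⟩ (my_erase_comm a.1 y x) rfl]
        rw [← Finsupp.single_add, co_anticomm R hodd hq.1 hq.2 hxy, Finsupp.single_zero]
    · rintro ⟨x, y⟩ hq hne
      intro e
      apply hne
      have hxy : y = x := congrArg Prod.fst e
      subst hxy
      rw [F2_diag]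
    · rintro ⟨x, y⟩ hq
      rw [Finset.mem_product] at hq ⊢
      exact ⟨hq.2, hq.1⟩
    · rintro ⟨x, y⟩ _; rfl
  rw [hzero, smul_zero]

end Identities

section Homotopy
variable (R : Type) [CommRing R]
variable {G : Type} [Group G] [Fintype G] [DecidableEq G]

lemma hv_pos {i : ℕ} (a : AA G i) (h : (1 : G) ∉ a.1)
    (pf : (insert (1 : G) a.1).card = (i + 1) + 1) :
    hv R i a = Finsupp.single ⟨insert 1 a.1, pf⟩
      (sg R (csgn a.1 + csgn (insert 1 a.1))) := by
  rw [hv, dif_neg h]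

lemma hv_neg {i : ℕ} (a : AA G i) (h : (1 : G) ∈ a.1) : hv R i a = 0 := by
  rw [hv, dif_pos h]

lemma posZ_self_singleton (u : G) : posZ ({u} : Finset G) u = 0 := by
  rw [posZ, Finset.erase_singleton, Finset.sum_empty]

lemma homotopy_single (hodd : Odd (Fintype.card G)) (i : ℕ) (a : AA G (i + 1)) (r : R) :
    dmap R (i + 1) (hmap R (i + 1) (Finsupp.single a r))
      + hmap R i (dmap R i (Finsupp.single a r)) = Finsupp.single a r := by
  have hcard : a.1.card = i + 2 := a.2
  rw [hmap_single, map_smul, dmap_single, map_smul, map_sum]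
  by_cases h1 : (1 : G) ∈ a.1
  · -- case 1 ∈ S
    rw [hv_neg R a h1, map_zero, smul_zero, zero_add]
    have hterm : ∀ x ∈ a.1, x ≠ 1 → hmap R i (delElt R i a x) = 0 := by
      intro x hx hx1
      have pfx : (a.1.erase x).card = i + 1 := by
        rw [Finset.card_erase_of_mem hx, hcard]; omega
      rw [delElt_pos R a hx pfx, hmap_single, hv_neg, smul_zero]
      exact Finset.mem_erase.mpr ⟨fun e => hx1 e.symm, h1⟩
    rw [Finset.sum_eq_single_of_mem (1 : G) h1 hterm]
    have pf1 : (a.1.erase 1).card = i + 1 := by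
      rw [Finset.card_erase_of_mem h1, hcard]; omega
    have pfi : (insert (1 : G) ((⟨a.1.erase 1, pf1⟩ : AA G i)).1).card = (i + 1) + 1 := by
      show (insert (1 : G) (a.1.erase 1)).card = i + 2
      rw [Finset.insert_erase h1, hcard]
    rw [delElt_pos R a h1 pf1, hmap_single, hv_pos R ⟨a.1.erase 1, pf1⟩
      (Finset.notMem_erase 1 a.1) pfi, Finsupp.smul_single', Finsupp.smul_single']
    apply single_eq_of
    · show insert (1 : G) (a.1.erase 1) = a.1
      exact Finset.insert_erase h1
    · -- r * (co * sg) = r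
      have hins : insert (1 : G) (a.1.erase 1) = a.1 := Finset.insert_erase h1
      have hco : co R a.1 1 * sg R (csgn ((⟨a.1.erase 1, pf1⟩ : AA G i)).1
          + csgn (insert 1 ((⟨a.1.erase 1, pf1⟩ : AA G i)).1)) = 1 := by
        show co R a.1 1 * sg R (csgn (a.1.erase 1) + csgn (insert 1 (a.1.erase 1))) = 1
        rw [hins, co, posZ_one_right, add_zero, ← sg_add]
        have key : ∀ A B : ZMod 2, A + B + (B + A) = 0 := by decide
        rw [key, sg_zero]
      rw [hco, mul_one]
  · -- case 1 ∉ S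
    have hx1ne : ∀ x ∈ a.1, x ≠ 1 := fun x hx e => h1 (e ▸ hx)
    have pfT : (insert (1 : G) a.1).card = (i + 2) + 1 := by
      rw [Finset.card_insert_of_notMem h1, hcard]
    have h1b : (1 : G) ∈ (⟨insert 1 a.1, pfT⟩ : AA G (i + 2)).1 :=
      Finset.mem_insert_self 1 a.1
    have pfb1 : (((⟨insert 1 a.1, pfT⟩ : AA G (i + 2))).1.erase 1).card = (i + 1) + 1 := by
      show ((insert (1 : G) a.1).erase 1).card = i + 2
      rw [Finset.erase_insert h1, hcard]
    have claim1 : dmap R (i + 1) (hv R (i + 1) a)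
        = Finsupp.single a 1
          + ∑ x ∈ a.1, sg R (csgn a.1 + csgn (insert 1 a.1))
              • delElt R (i + 1) ⟨insert 1 a.1, pfT⟩ x := by
      rw [hv_pos R a h1 pfT, dmap_single]
      rw [show ((⟨insert 1 a.1, pfT⟩ : AA G (i + 2))).1 = insert 1 a.1 from rfl]
      rw [Finset.sum_insert h1, smul_add, Finset.smul_sum]
      congr 1
      rw [delElt_pos R (⟨insert 1 a.1, pfT⟩ : AA G (i + 2)) h1b pfb1, Finsupp.smul_single']
      apply single_eq_of
      · show (insert (1 : G) a.1).erase 1 = a.1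
        exact Finset.erase_insert h1
      · show sg R (csgn a.1 + csgn (insert 1 a.1)) * co R (insert 1 a.1) 1 = 1
        rw [co]
        rw [show (insert (1 : G) a.1).erase 1 = a.1 from Finset.erase_insert h1]
        rw [posZ_one_right, add_zero, ← sg_add]
        have key : ∀ A B : ZMod 2, A + B + (B + A) = 0 := by decide
        rw [key, sg_zero]
    have claim2 : ∀ x ∈ a.1,
        sg R (csgn a.1 + csgn (insert 1 a.1)) • delElt R (i + 1) ⟨insert 1 a.1, pfT⟩ x
          + hmap R i (delElt R i a x) = 0 := by
      intro x hx
      have hxne : x ≠ 1 := hx1ne x hx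
      have hxT : x ∈ (⟨insert 1 a.1, pfT⟩ : AA G (i + 2)).1 :=
        Finset.mem_insert_of_mem hx
      have pfbx : (((⟨insert 1 a.1, pfT⟩ : AA G (i + 2))).1.erase x).card = (i + 1) + 1 := by
        show ((insert (1 : G) a.1).erase x).card = i + 2
        rw [Finset.card_erase_of_mem (Finset.mem_insert_of_mem hx),
          Finset.card_insert_of_notMem h1, hcard]
        omega
      have pfx : (a.1.erase x).card = i + 1 := by
        rw [Finset.card_erase_of_mem hx, hcard]; omega
      have h1ex : (1 : G) ∉ (⟨a.1.erase x, pfx⟩ : AA G i).1 :=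
        fun e => h1 (Finset.mem_of_mem_erase e)
      have pfc : (insert (1 : G) ((⟨a.1.erase x, pfx⟩ : AA G i)).1).card = (i + 1) + 1 := by
        show (insert (1 : G) (a.1.erase x)).card = i + 2
        rw [Finset.card_insert_of_notMem h1ex, pfx]
      rw [delElt_pos R (⟨insert 1 a.1, pfT⟩ : AA G (i + 2)) hxT pfbx, Finsupp.smul_single',
        delElt_pos R a hx pfx, hmap_single, hv_pos R ⟨a.1.erase x, pfx⟩ h1ex pfc,
        Finsupp.smul_single']
      rw [single_eq_of R (⟨((⟨insert 1 a.1, pfT⟩ : AA G (i + 2))).1.erase x, pfbx⟩ : AA G (i + 1))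
        ⟨insert 1 ((⟨a.1.erase x, pfx⟩ : AA G i)).1, pfc⟩
        (show (insert (1 : G) a.1).erase x = insert 1 (a.1.erase x) from erase_insert_comm hxne)
        rfl]
      rw [← Finsupp.single_add]
      have hcoeff : sg R (csgn a.1 + csgn (insert 1 a.1)) * co R (insert 1 a.1) x
          + co R a.1 x * sg R (csgn (a.1.erase x) + csgn (insert 1 (a.1.erase x))) = 0 := by
        rw [co, co]
        rw [show (insert (1 : G) a.1).erase x = insert 1 (a.1.erase x) from
          erase_insert_comm hxne]
        rw [posZ_insert_one h1 hx, ← sg_add, ← sg_add]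
        have key : ∀ A B C P Q : ZMod 2,
            A + B + (B + C + (P + 1)) = (A + Q + P + (Q + C)) + 1 := by decide
        rw [key (csgn a.1) (csgn (insert 1 a.1)) (csgn (insert 1 (a.1.erase x)))
          (posZ a.1 x) (csgn (a.1.erase x)), sg_add_one]
        ring
      show Finsupp.single (⟨insert 1 (a.1.erase x), pfc⟩ : AA G (i + 1)) _ = 0
      rw [hcoeff, Finsupp.single_zero]
    rw [claim1, smul_add, add_assoc, ← smul_add, ← Finset.sum_add_distrib,
      Finset.sum_eq_zero claim2, smul_zero, add_zero, Finsupp.smul_single', mul_one]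

end Homotopy

section Bottom
variable (R : Type) [CommRing R]
variable {G : Type} [Group G] [Fintype G] [DecidableEq G]

lemma eta_apply (r : R) : eta R (G := G) r
    = r • Finsupp.single ⟨({1} : Finset G), Finset.card_singleton 1⟩
        (sg R (csgn ({1} : Finset G))) := rfl

lemma pair_erase_left {u v : G} (huv : u ≠ v) : ({u, v} : Finset G).erase u = {v} := by
  ext z
  simp only [Finset.mem_erase, Finset.mem_insert, Finset.mem_singleton]
  constructor
  · rintro ⟨hz, rfl | rfl⟩
    · exact absurd rfl hz
    · rfl
  · rintro rfl
    exact ⟨fun e => huv e.symm, Or.inr rfl⟩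

lemma pair_erase_right {u v : G} (huv : u ≠ v) : ({u, v} : Finset G).erase v = {u} := by
  have : ({u, v} : Finset G) = {v, u} := by
    ext z; simp only [Finset.mem_insert, Finset.mem_singleton]; tauto
  rw [this]
  exact pair_erase_left huv.symm

lemma epsd_single (hodd : Odd (Fintype.card G)) (a : AA G 1) (r : R) :
    eps R (dmap R 0 (Finsupp.single a r)) = 0 := by
  obtain ⟨u, v, huv, hS⟩ := Finset.card_eq_two.mp a.2
  rw [dmap_single, map_smul, map_sum]
  have hu : u ∈ a.1 := by rw [hS]; exact Finset.mem_insert_self u {v}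
  have hv' : v ∈ a.1 := by rw [hS]; exact Finset.mem_insert_of_mem (Finset.mem_singleton_self v)
  have pfu : (a.1.erase u).card = 0 + 1 := by
    rw [Finset.card_erase_of_mem hu, a.2]
  have pfv : (a.1.erase v).card = 0 + 1 := by
    rw [Finset.card_erase_of_mem hv', a.2]
  have sum_two : ∑ x ∈ a.1, eps R (delElt R 0 a x)
      = eps R (delElt R 0 a u) + eps R (delElt R 0 a v) := by
    rw [show a.1 = {u, v} from hS]
    exact Finset.sum_pair huv
  rw [sum_two, delElt_pos R a hu pfu, delElt_pos R a hv' pfv, eps_single, eps_single]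
  have heu : a.1.erase u = {v} := by rw [hS]; exact pair_erase_left huv
  have hev : a.1.erase v = {u} := by rw [hS]; exact pair_erase_right huv
  have hpu : posZ a.1 u = zc (w v < w u) := by
    rw [posZ, heu, Finset.sum_singleton]
  have hpv : posZ a.1 v = zc (w u < w v) := by
    rw [posZ, hev, Finset.sum_singleton]
  have hcsu : csgn ((⟨a.1.erase u, pfu⟩ : AA G 0)).1 = csgn ({v} : Finset G) :=
    congrArg csgn heu
  have hcsv : csgn ((⟨a.1.erase v, pfv⟩ : AA G 0)).1 = csgn ({u} : Finset G) :=
    congrArg csgn hev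
  have hz : zc (w v < w u) = zc (w u < w v) + 1 := by
    have h3 : zc (w u < w v) + zc (w v < w u) = 1 := zc_tricho huv
    have key : ∀ z1 z2 : ZMod 2, z1 + z2 = 1 → z2 = z1 + 1 := by decide
    exact key _ _ h3
  rw [co, co, hcsu, hcsv, hpu, hpv, hz, ← sg_add, ← sg_add]
  have key2 : ∀ A B z : ZMod 2, A + B + z + B = A + z := by decide
  rw [key2 (csgn a.1) (csgn ({v} : Finset G)) (zc (w u < w v) + 1),
    key2 (csgn a.1) (csgn ({u} : Finset G)) (zc (w u < w v))]
  rw [← add_assoc, sg_add_one]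
  simp

lemma bottom_single (hodd : Odd (Fintype.card G)) (a : AA G 0) (r : R) :
    dmap R 0 (hmap R 0 (Finsupp.single a r)) + eta R (eps R (Finsupp.single a r))
      = Finsupp.single a r := by
  have hcard : a.1.card = 0 + 1 := a.2
  obtain ⟨u, hu⟩ := Finset.card_eq_one.mp a.2
  rw [hmap_single, map_smul, eps_single, eta_apply]
  by_cases h1 : (1 : G) ∈ a.1
  · have h1' : (1 : G) = u := by rw [hu] at h1; exact Finset.mem_singleton.mp h1
    have hu1 : a.1 = {1} := by rw [hu, ← h1']
    rw [hv_neg R a h1, map_zero, smul_zero, zero_add, Finsupp.smul_single']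
    apply single_eq_of
    · exact hu1.symm
    · rw [← hu1, mul_assoc, sg_mul_self, mul_one]
  · have hune : u ≠ 1 := fun e => h1 (e ▸ (hu ▸ Finset.mem_singleton_self u))
    have pfT : (insert (1 : G) a.1).card = (0 + 1) + 1 := by
      rw [Finset.card_insert_of_notMem h1, hcard]
    have h1b : (1 : G) ∈ (⟨insert 1 a.1, pfT⟩ : AA G 1).1 := Finset.mem_insert_self 1 a.1
    have pfb1 : (((⟨insert 1 a.1, pfT⟩ : AA G 1)).1.erase 1).card = 0 + 1 := by
      show ((insert (1 : G) a.1).erase 1).card = 0 + 1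
      rw [Finset.erase_insert h1, hcard]
    have hub : u ∈ (⟨insert 1 a.1, pfT⟩ : AA G 1).1 :=
      Finset.mem_insert_of_mem (hu ▸ Finset.mem_singleton_self u)
    have pfbu : (((⟨insert 1 a.1, pfT⟩ : AA G 1)).1.erase u).card = 0 + 1 := by
      show ((insert (1 : G) a.1).erase u).card = 0 + 1
      rw [Finset.card_erase_of_mem (Finset.mem_insert_of_mem (hu ▸ Finset.mem_singleton_self u)),
        Finset.card_insert_of_notMem h1, hcard]
    have herase : (insert (1 : G) a.1).erase u = {1} := by
      rw [erase_insert_comm hune, hu, Finset.erase_singleton]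
      rfl
    have claim1 : dmap R 0 (hv R 0 a)
        = Finsupp.single a 1
          + sg R (csgn a.1 + csgn (insert 1 a.1)) • delElt R 0 (⟨insert 1 a.1, pfT⟩ : AA G 1) u := by
      rw [hv_pos R a h1 pfT, dmap_single]
      rw [show ((⟨insert 1 a.1, pfT⟩ : AA G 1)).1 = insert 1 a.1 from rfl]
      rw [Finset.sum_insert h1, smul_add]
      congr 1
      · rw [delElt_pos R (⟨insert 1 a.1, pfT⟩ : AA G 1) h1b pfb1, Finsupp.smul_single']
        apply single_eq_of
        · show (insert (1 : G) a.1).erase 1 = a.1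
          exact Finset.erase_insert h1
        · show sg R (csgn a.1 + csgn (insert 1 a.1)) * co R (insert 1 a.1) 1 = 1
          rw [co, show (insert (1 : G) a.1).erase 1 = a.1 from Finset.erase_insert h1,
            posZ_one_right, add_zero, ← sg_add]
          have key : ∀ A B : ZMod 2, A + B + (B + A) = 0 := by decide
          rw [key, sg_zero]
      · congr 1
        apply Finset.sum_eq_single_of_mem u (show u ∈ a.1 from hu ▸ Finset.mem_singleton_self u)
        intro b hb hbu
        exact absurd (Finset.mem_singleton.mp (hu ▸ hb)) hbu
    have claim2 : sg R (csgn a.1 + csgn (insert 1 a.1))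
          • delElt R 0 (⟨insert 1 a.1, pfT⟩ : AA G 1) u
        = Finsupp.single (⟨({1} : Finset G), Finset.card_singleton 1⟩ : AA G 0)
            (- sg R (csgn a.1 + csgn ({1} : Finset G))) := by
      rw [delElt_pos R (⟨insert 1 a.1, pfT⟩ : AA G 1) hub pfbu, Finsupp.smul_single']
      apply single_eq_of
      · exact herase
      · show sg R (csgn a.1 + csgn (insert 1 a.1)) * co R (insert 1 a.1) u
          = - sg R (csgn a.1 + csgn ({1} : Finset G))
        rw [co, herase]
        have hpz : posZ (insert (1 : G) a.1) u = 1 := by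
          rw [posZ_insert_one h1 (hu ▸ Finset.mem_singleton_self u),
            show a.1 = {u} from hu, posZ_self_singleton, zero_add]
        rw [hpz, ← sg_add]
        have key : ∀ A B C : ZMod 2, A + B + (B + C + 1) = (A + C) + 1 := by decide
        rw [key, sg_add_one]
    rw [claim1, smul_add, claim2, Finsupp.smul_single', Finsupp.smul_single', mul_one,
      Finsupp.smul_single', add_assoc, ← Finsupp.single_add]
    have : r * -sg R (csgn a.1 + csgn ({1} : Finset G))
        + r * sg R (csgn a.1) * sg R (csgn ({1} : Finset G)) = 0 := by
      rw [mul_assoc, show sg R (csgn a.1) * sg R (csgn ({1} : Finset G))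
        = sg R (csgn a.1 + csgn ({1} : Finset G)) from (sg_add R _ _).symm]
      ring
    rw [this, Finsupp.single_zero, add_zero]

lemma eps_surj : Function.Surjective (eps R (G := G)) := by
  intro r
  refine ⟨Finsupp.single ⟨({1} : Finset G), Finset.card_singleton 1⟩
    (r * sg R (csgn ({1} : Finset G))), ?_⟩
  rw [eps_single, mul_assoc, sg_mul_self, mul_one]

-- linear-map level corollaries
lemma dd_comp (hodd : Odd (Fintype.card G)) (i : ℕ) :
    (dmap R i (G := G)).comp (dmap R (i + 1)) = 0 := by
  apply Finsupp.lhom_ext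
  intro a r
  simpa using dd_single R hodd i a r

lemma homotopy_comp (hodd : Odd (Fintype.card G)) (i : ℕ) :
    (dmap R (i + 1) (G := G)).comp (hmap R (i + 1)) + (hmap R i).comp (dmap R i)
      = LinearMap.id := by
  apply Finsupp.lhom_ext
  intro a r
  simpa using homotopy_single R hodd i a r

lemma bottom_comp (hodd : Odd (Fintype.card G)) :
    (dmap R 0 (G := G)).comp (hmap R 0) + (eta R).comp (eps R) = LinearMap.id := by
  apply Finsupp.lhom_ext
  intro a r
  simpa using bottom_single R hodd a r

lemma epsd_comp (hodd : Odd (Fintype.card G)) :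
    (eps R (G := G)).comp (dmap R 0) = 0 := by
  apply Finsupp.lhom_ext
  intro a r
  simpa using epsd_single R hodd a r

lemma ker_eps (hodd : Odd (Fintype.card G)) :
    LinearMap.ker (eps R (G := G)) = LinearMap.range (dmap R 0) := by
  apply le_antisymm
  · intro x hx
    rw [LinearMap.mem_ker] at hx
    have := LinearMap.congr_fun (bottom_comp R hodd) x
    simp only [LinearMap.add_apply, LinearMap.comp_apply, LinearMap.id_apply] at this
    rw [hx, map_zero, add_zero] at this
    exact ⟨hmap R 0 x, this⟩
  · rintro x ⟨y, rfl⟩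
    rw [LinearMap.mem_ker]
    have := LinearMap.congr_fun (epsd_comp R hodd) y
    simpa using this

lemma ker_dmap (hodd : Odd (Fintype.card G)) (i : ℕ) :
    LinearMap.ker (dmap R i (G := G)) = LinearMap.range (dmap R (i + 1)) := by
  apply le_antisymm
  · intro x hx
    rw [LinearMap.mem_ker] at hx
    have := LinearMap.congr_fun (homotopy_comp R hodd i) x
    simp only [LinearMap.add_apply, LinearMap.comp_apply, LinearMap.id_apply] at this
    rw [hx, map_zero, add_zero] at this
    exact ⟨hmap R (i + 1) x, this⟩
  · rintro x ⟨y, rfl⟩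
    rw [LinearMap.mem_ker]
    have := LinearMap.congr_fun (dd_comp R hodd i) y
    simpa using this

end Bottom

section Free
variable {G : Type} [Group G] [Fintype G] [DecidableEq G]

noncomputable def elt (a : AA G 0) : G := Classical.choose (Finset.card_eq_one.mp a.2)

lemma elt_spec (a : AA G 0) : a.1 = {elt a} := Classical.choose_spec (Finset.card_eq_one.mp a.2)

lemma elt_eq {a : AA G 0} {x : G} (h : a.1 = {x}) : elt a = x := by
  have h2 := elt_spec a
  rw [h] at h2
  exact (Finset.singleton_injective h2.symm)

noncomputable def freeEquiv : AA G 0 ≃ Fin 1 × G where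
  toFun a := (0, elt a)
  invFun p := ⟨{p.2}, Finset.card_singleton _⟩
  left_inv a := Subtype.ext (elt_spec a).symm
  right_inv p := by
    refine Prod.ext (Subsingleton.elim _ _) ?_
    exact elt_eq rfl

lemma freeEquiv_equivariant (g : G) (a : AA G 0) :
    freeEquiv (act 0 g a) = ((freeEquiv a).1, g * (freeEquiv a).2) := by
  have h : (act 0 g a).1 = {g * elt a} := by
    rw [act_apply, elt_spec a]
    rw [Finset.smul_finset_singleton]
    rfl
  refine Prod.ext (Subsingleton.elim _ _) ?_
  show elt (act 0 g a) = g * elt a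
  exact elt_eq h

end Free

end Stmt12Aux

/-- For a finite `p`-group `G` with `p` odd and a commutative ring `R`, the trivial module
`R` admits a finite resolution `0 → Pₙ → ⋯ → P₁ → P₀ → R → 0` by finitely generated
permutation `RG`-modules with `P₀` free (obtained from the Koszul complex of the
augmentation `RG → R`).
Here, for `i ≥ 1`, `Cᵢ₊₁` is the linearization `A i →₀ R` of a finite `G`-set `A i`
(the `G`-action is encoded by `φ i : G →* Equiv.Perm (A i)`), the differentials are
`G`-equivariant, `ε : C₁ → C₀ = R` is equivariant for the trivial action on `R`, and
`A 0` is a free `G`-set, so that `C₁` is a free `RG`-module. -/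
theorem stmt_12 (p : ℕ) (hp : p.Prime) (hodd : p ≠ 2)
    (G : Type) [Group G] [Fintype G] (n : ℕ) (hG : Fintype.card G = p ^ n)
    (R : Type) [CommRing R] :
    ∃ (N : ℕ) (A : ℕ → Type) (_ : ∀ i, Fintype (A i)) (φ : ∀ i, G →* Equiv.Perm (A i))
      (d : ∀ i, ((A (i + 1) →₀ R) →ₗ[R] (A i →₀ R)))
      (ε : (A 0 →₀ R) →ₗ[R] R),
      -- bounded
      (∀ i, N ≤ i → IsEmpty (A i)) ∧
      -- the differentials are G-equivariant
      (∀ (i : ℕ) (g : G) (f : A (i + 1) →₀ R),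
        d i (Finsupp.mapDomain (φ (i + 1) g) f) = Finsupp.mapDomain (φ i g) (d i f)) ∧
      -- ε is equivariant for the trivial action on C₀ = R
      (∀ (g : G) (f : A 0 →₀ R), ε (Finsupp.mapDomain (φ 0 g) f) = ε f) ∧
      -- exactness of 0 → Cₙ → ⋯ → C₁ → C₀ → 0
      Function.Surjective ε ∧
      (LinearMap.ker ε = LinearMap.range (d 0)) ∧
      (∀ i, LinearMap.ker (d i) = LinearMap.range (d (i + 1))) ∧
      -- C₁ is a free RG-module: A 0 is a free G-set
      (∃ (r : ℕ) (e : A 0 ≃ (Fin r × G)),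
        ∀ (g : G) (a : A 0), e (φ 0 g a) = ((e a).1, g * (e a).2)) := by
  classical
  have hoddG : Odd (Fintype.card G) := by
    rw [hG]; exact (hp.odd_of_ne_two hodd).pow
  refine ⟨Fintype.card G, fun i => Stmt12Aux.AA G i, fun i => Stmt12Aux.AAfintype i,
    fun i => Stmt12Aux.phi i, fun i => Stmt12Aux.dmap R i, Stmt12Aux.eps R,
    ?_, ?_, ?_, ?_, ?_, ?_, ?_⟩
  · exact fun i hi => Stmt12Aux.AA_isEmpty i hi
  · exact fun i g f => Stmt12Aux.d_equiv R hoddG i g f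
  · exact fun g f => Stmt12Aux.eps_equiv R hoddG g f
  · exact Stmt12Aux.eps_surj R
  · exact Stmt12Aux.ker_eps R hoddG
  · exact fun i => Stmt12Aux.ker_dmap R hoddG i
  · exact ⟨1, Stmt12Aux.freeEquiv, fun g a => Stmt12Aux.freeEquiv_equivariant g a⟩
end
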